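/- Farkas' lemma (inequality form): For a real m×n matrix B and vector b ∈ ℝᵐ, the system B·p ≤ b (componentwise) has a solution p ∈ ℝⁿ if and only if for every vector t ∈ ℝᵐ with t ≥ 0 and Bᵀt = 0 one has tᵀb ≥ 0. -/

import Mathlib

open Matrix

namespace FarkasAux

variable {ι : Type} [Fintype ι]

/-- Index type of the reduced (Fourier–Motzkin eliminated) system. -/
abbrev Idx (a : ι → ℝ) : Type :=
  {i // a i = 0} ⊕ ({i // 0 < a i} × {i // a i < 0})

/-- Reduction of a column vector. -/
noncomputable def red (a v : ι → ℝ) : Idx a → ℝ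
  | .inl z => v z.1
  | .inr (pp, nn) => v pp.1 / a pp.1 - v nn.1 / a nn.1

/-- Weights expressing each reduced row as a nonnegative combination of original rows. -/
noncomputable def wt [DecidableEq ι] (a : ι → ℝ) : Idx a → ι → ℝ
  | .inl z => fun i => if z.1 = i then 1 else 0
  | .inr (pp, nn) => fun i =>
      (if pp.1 = i then 1 / a i else 0) + (if nn.1 = i then -(1 / a i) else 0)

lemma wt_nonneg [DecidableEq ι] (a : ι → ℝ) (r : Idx a) (i : ι) : 0 ≤ wt a r i := by
  rcases r with z | ⟨pp, nn⟩
  · simp only [wt]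
    split_ifs <;> norm_num
  · simp only [wt]
    refine add_nonneg ?_ ?_ <;> split_ifs with h
    · subst h; have := pp.2; positivity
    · exact le_rfl
    · subst h
      have := nn.2
      rw [le_neg, neg_zero]
      exact le_of_lt (div_neg_of_pos_of_neg one_pos this)
    · exact le_rfl

lemma sum_wt_mul [DecidableEq ι] (a : ι → ℝ) (r : Idx a) (v : ι → ℝ) :
    ∑ i, wt a r i * v i = red a v r := by
  rcases r with z | ⟨pp, nn⟩
  · simp [wt, red, ite_mul, Finset.sum_ite_eq]
  · simp only [wt, red, add_mul, ite_mul, zero_mul, neg_mul, Finset.sum_add_distrib,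
      Finset.sum_ite_eq, Finset.mem_univ, if_true, Finset.sum_neg_distrib]
    ring

lemma red_self (a : ι → ℝ) (r : Idx a) : red a a r = 0 := by
  rcases r with z | ⟨pp, nn⟩
  · exact z.2
  · simp [red, div_self (ne_of_gt pp.2), div_self (ne_of_lt nn.2)]

theorem aux : ∀ (n : ℕ) (ι : Type) [Fintype ι] [DecidableEq ι]
    (B : Matrix ι (Fin n) ℝ) (b : ι → ℝ),
    (¬ ∃ p : Fin n → ℝ, B *ᵥ p ≤ b) →
    ∃ t : ι → ℝ, 0 ≤ t ∧ Bᵀ *ᵥ t = 0 ∧ t ⬝ᵥ b < 0 := by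
  intro n
  induction n with
  | zero =>
    intro ι _ _ B b hinf
    have h0 : ¬ (B *ᵥ (fun _ => 0) ≤ b) := fun h => hinf ⟨_, h⟩
    rw [Pi.le_def] at h0
    push_neg at h0
    obtain ⟨i, hi⟩ := h0
    have hbi : b i < 0 := by
      simpa [Matrix.mulVec, dotProduct] using hi
    refine ⟨fun i' => if i = i' then 1 else 0, ?_, ?_, ?_⟩
    · intro i'; dsimp; split_ifs <;> norm_num
    · funext j; exact j.elim0
    · simpa [dotProduct, ite_mul, Finset.sum_ite_eq] using hbi
  | succ n IH =>
    intro ι _ _ B b hinf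
    classical
    set a : ι → ℝ := fun i => B i 0 with ha
    set B' : Matrix ι (Fin n) ℝ := fun i j => B i j.succ with hB'
    haveI : Fintype (Idx a) := Fintype.ofFinite _
    set C : Matrix (Idx a) (Fin n) ℝ := fun r j => red a (fun i => B' i j) r with hC
    have hrow : ∀ (x : ℝ) (q : Fin n → ℝ) (i : ι),
        (B *ᵥ Fin.cons x q) i = a i * x + (B' *ᵥ q) i := by
      intro x q i
      simp [Matrix.mulVec, dotProduct, Fin.sum_univ_succ, hB', ha]
    have hred : ¬ ∃ q : Fin n → ℝ, C *ᵥ q ≤ red a b := by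
      rintro ⟨q, hq⟩
      apply hinf
      set u : ι → ℝ := fun i => (b i - (B' *ᵥ q) i) / a i with hu
      have hZ : ∀ i, a i = 0 → (B' *ᵥ q) i ≤ b i := by
        intro i h
        have h2 := hq (Sum.inl ⟨i, h⟩)
        simpa [Matrix.mulVec, dotProduct, hC, red] using h2
      have hPN : ∀ (pp : {i // 0 < a i}) (nn : {i // a i < 0}), u nn.1 ≤ u pp.1 := by
        intro pp nn
        have hp := pp.2
        have hn := nn.2
        have h := hq (Sum.inr (pp, nn))
        have hexp : (C *ᵥ q) (Sum.inr (pp, nn)) =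
            (B' *ᵥ q) pp.1 / a pp.1 - (B' *ᵥ q) nn.1 / a nn.1 := by
          simp [Matrix.mulVec, dotProduct, hC, red, sub_mul,
            Finset.sum_sub_distrib, div_mul_eq_mul_div, ← Finset.sum_div]
        rw [hexp] at h
        have h2 : red a b (Sum.inr (pp, nn)) = b pp.1 / a pp.1 - b nn.1 / a nn.1 := rfl
        rw [h2] at h
        simp only [hu, sub_div]
        linarith
      have key : ∀ x : ℝ, (∀ pp : {i // 0 < a i}, x ≤ u pp.1) →
          (∀ nn : {i // a i < 0}, u nn.1 ≤ x) → ∃ p, B *ᵥ p ≤ b := by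
        intro x hxP hxN
        refine ⟨Fin.cons x q, fun i => ?_⟩
        rw [hrow]
        rcases lt_trichotomy (a i) 0 with h | h | h
        · have h1 := hxN ⟨i, h⟩
          have h2 : a i * u i = b i - (B' *ᵥ q) i := by
            have hne : a i ≠ 0 := ne_of_lt h
            simp only [hu]; field_simp
          nlinarith
        · rw [h, zero_mul, zero_add]; exact hZ i h
        · have h1 := hxP ⟨i, h⟩
          have h2 : a i * u i = b i - (B' *ᵥ q) i := by
            have hne : a i ≠ 0 := ne_of_gt h
            simp only [hu]; field_simp
          nlinarith
      by_cases hP : Nonempty {i // 0 < a i}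
      · haveI := hP
        refine key ((Finset.univ : Finset {i // 0 < a i}).inf' Finset.univ_nonempty (fun pp => u pp.1)) ?_ ?_
        · intro pp; exact Finset.inf'_le _ (Finset.mem_univ pp)
        · intro nn; exact Finset.le_inf' _ _ (fun pp _ => hPN pp nn)
      · by_cases hN : Nonempty {i // a i < 0}
        · haveI := hN
          refine key ((Finset.univ : Finset {i // a i < 0}).sup' Finset.univ_nonempty (fun nn => u nn.1)) ?_ ?_
          · intro pp; exact (hP ⟨pp⟩).elim
          · intro nn; exact Finset.le_sup' (fun nn : {i // a i < 0} => u nn.1) (Finset.mem_univ nn)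
        · exact key 0 (fun pp => (hP ⟨pp⟩).elim) (fun nn => (hN ⟨nn⟩).elim)
    obtain ⟨t', ht0, htC, htd⟩ := IH (Idx a) C (red a b) hred
    have transfer : ∀ v : ι → ℝ,
        ∑ i, (∑ r, t' r * wt a r i) * v i = ∑ r, t' r * red a v r := by
      intro v
      calc ∑ i, (∑ r, t' r * wt a r i) * v i
          = ∑ i, ∑ r, t' r * (wt a r i * v i) := by
            simp [Finset.sum_mul, mul_assoc]
        _ = ∑ r, ∑ i, t' r * (wt a r i * v i) := Finset.sum_comm
        _ = ∑ r, t' r * ∑ i, wt a r i * v i := by simp [Finset.mul_sum]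
        _ = ∑ r, t' r * red a v r := by simp [sum_wt_mul]
    refine ⟨fun i => ∑ r, t' r * wt a r i, ?_, ?_, ?_⟩
    · intro i
      exact Finset.sum_nonneg fun r _ => mul_nonneg (ht0 r) (wt_nonneg a r i)
    · funext j
      have hj : (Bᵀ *ᵥ fun i => ∑ r, t' r * wt a r i) j
          = ∑ i, (∑ r, t' r * wt a r i) * B i j := by
        simp [Matrix.mulVec, dotProduct, Matrix.transpose_apply, mul_comm]
      rw [hj, transfer (fun i => B i j)]
      show ∑ r, t' r * red a (fun i => B i j) r = (0 : Fin (n+1) → ℝ) j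
      rw [Pi.zero_apply]
      refine Fin.cases ?_ ?_ j
      · rw [show (fun i => B i 0) = a from rfl]
        simp [red_self]
      · intro j'
        have h1 : (Cᵀ *ᵥ t') j' = 0 := by rw [htC]; rfl
        calc ∑ r, t' r * red a (fun i => B i (Fin.succ j')) r
            = ∑ r, Cᵀ j' r * t' r := by
              refine Finset.sum_congr rfl fun r _ => ?_
              rw [Matrix.transpose_apply, mul_comm]
          _ = 0 := by simpa [Matrix.mulVec, dotProduct] using h1
    · show ∑ i, (∑ r, t' r * wt a r i) * b i < 0
      rw [transfer b]
      simpa [dotProduct] using htd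

end FarkasAux

open Matrix

/-- Farkas' lemma (inequality form): `B·p ≤ b` has a solution iff
for every `t ≥ 0` with `Bᵀ t = 0` one has `tᵀ b ≥ 0`. -/
theorem stmt4 (m n : ℕ) (B : Matrix (Fin m) (Fin n) ℝ) (b : Fin m → ℝ) :
    (∃ p : Fin n → ℝ, B *ᵥ p ≤ b) ↔
    (∀ t : Fin m → ℝ, 0 ≤ t → Bᵀ *ᵥ t = 0 → 0 ≤ t ⬝ᵥ b) := by
  constructor
  · rintro ⟨p, hp⟩ t ht htB
    have h1 : t ⬝ᵥ (B *ᵥ p) = 0 := by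
      rw [dotProduct_mulVec, ← Matrix.mulVec_transpose, htB, zero_dotProduct]
    have h2 : t ⬝ᵥ (B *ᵥ p) ≤ t ⬝ᵥ b := by
      refine Finset.sum_le_sum fun i _ => ?_
      exact mul_le_mul_of_nonneg_left (hp i) (ht i)
    linarith
  · intro h
    by_contra hinf
    obtain ⟨t, ht0, htB, htd⟩ := FarkasAux.aux n (Fin m) B b hinf
    exact absurd (h t ht0 htB) (not_le.mpr htd)
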